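/- Let A, B be n×n complex matrices and p ≥ 2. Then ‖A+B‖ₚᵖ + ‖A−B‖ₚᵖ ≤ 2^{p−1}(‖A‖ₚᵖ + ‖B‖ₚᵖ). -/

import Mathlib

/-- `schattenPowNorm p X = ‖X‖ₚᵖ = tr ((XᴴX)^(p/2))`, the `p`-th power of the Schatten
`p`-norm of a complex matrix, via the continuous functional calculus. -/
noncomputable def schattenPowNorm {d : Type*} [Fintype d] [DecidableEq d]
    (p : ℝ) (X : Matrix d d ℂ) : ℝ :=
  ((cfc (fun x : ℝ => x ^ (p / 2)) (X.conjTranspose * X)).trace).re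

open Matrix Polynomial in
lemma my_charpoly_diagonal {n : Type*} [Fintype n] [DecidableEq n] {R : Type*} [CommRing R]
    (v : n → R) : (Matrix.diagonal v).charpoly = ∏ i, (X - C (v i)) := by
  have : charmatrix (Matrix.diagonal v) = Matrix.diagonal fun i => (X : R[X]) - C (v i) := by
    ext i j
    by_cases h : i = j
    · subst h; simp
    · simp [h, Matrix.diagonal_apply_ne _ h]
  rw [Matrix.charpoly, this, Matrix.det_diagonal]

open Matrix Polynomial in
lemma my_eval_charpoly {n : Type*} [Fintype n] [DecidableEq n] {R : Type*} [CommRing R]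
    (M : Matrix n n R) (z : R) : M.charpoly.eval z = (z • (1 : Matrix n n R) - M).det := by
  rw [Matrix.charpoly, ← Polynomial.coe_evalRingHom, RingHom.map_det]
  congr 1
  ext i j
  by_cases h : i = j
  · subst h; simp [Matrix.charmatrix_apply_eq, Matrix.one_apply]
  · simp [Matrix.charmatrix_apply_ne _ _ _ h, Matrix.one_apply_ne h, Matrix.smul_apply]

open Matrix Polynomial in
lemma my_charpoly_mul_comm {n : Type*} [Fintype n] [DecidableEq n]
    (M N : Matrix n n ℂ) : (M * N).charpoly = (N * M).charpoly := by
  apply Polynomial.funext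
  intro z
  rw [my_eval_charpoly, my_eval_charpoly]
  rcases eq_or_ne z 0 with rfl | hz
  · simp only [zero_smul, zero_sub, Matrix.det_neg]
    rw [Matrix.det_mul_comm]
  · have h1 : z • (1 : Matrix n n ℂ) - M * N = z • ((1 : Matrix n n ℂ) + (-z⁻¹ • M) * N) := by
      rw [smul_add, Matrix.smul_mul, smul_smul, mul_neg, mul_inv_cancel₀ hz, neg_one_smul,
        sub_eq_add_neg]
    have h2 : z • (1 : Matrix n n ℂ) - N * M = z • ((1 : Matrix n n ℂ) + N * (-z⁻¹ • M)) := by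
      rw [smul_add, Matrix.mul_smul, smul_comm, smul_smul, neg_mul, inv_mul_cancel₀ hz,
        neg_one_smul, sub_eq_add_neg]
    rw [h1, h2, Matrix.det_smul, Matrix.det_smul, Matrix.det_one_add_mul_comm]

open Matrix Polynomial in
lemma my_charpoly_unitary_conj {n : Type*} [Fintype n] [DecidableEq n]
    (U : Matrix.unitaryGroup n ℂ) (G : Matrix n n ℂ) :
    ((U : Matrix n n ℂ) * G * (star U : Matrix n n ℂ)).charpoly = G.charpoly := by
  rw [my_charpoly_mul_comm ((U : Matrix n n ℂ) * G) (star U : Matrix n n ℂ), ← mul_assoc]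
  congr 1
  rw [show (star U : Matrix n n ℂ) * (U : Matrix n n ℂ) = 1 from Unitary.star_mul_self_of_mem U.2,
    one_mul]

open Matrix Polynomial in
lemma my_charpoly_hermitian {n : Type*} [Fintype n] [DecidableEq n]
    {G : Matrix n n ℂ} (hG : G.IsHermitian) :
    G.charpoly = ∏ i, (X - C (hG.eigenvalues i : ℂ)) := by
  conv_lhs => rw [hG.spectral_theorem, Unitary.conjStarAlgAut_apply]
  rw [my_charpoly_unitary_conj hG.eigenvectorUnitary
    (Matrix.diagonal (RCLike.ofReal ∘ hG.eigenvalues)), my_charpoly_diagonal]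
  rfl

open Matrix Polynomial in
lemma my_sum_f_eigen {m₁ m₂ : Type*} [Fintype m₁] [DecidableEq m₁] [Fintype m₂] [DecidableEq m₂]
    {G : Matrix m₁ m₁ ℂ} (hG : G.IsHermitian) (b : m₂ → ℝ)
    (hcp : G.charpoly = ∏ j, (X - C (b j : ℂ))) (f : ℝ → ℝ) :
    ∑ i, f (hG.eigenvalues i) = ∑ j, f (b j) := by
  have key : Multiset.map (fun i => (hG.eigenvalues i : ℂ)) Finset.univ.val
      = Multiset.map (fun j => (b j : ℂ)) Finset.univ.val := by
    have e1 := Polynomial.roots_multiset_prod_X_sub_C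
      (Multiset.map (fun i => (hG.eigenvalues i : ℂ)) Finset.univ.val)
    have e2 := Polynomial.roots_multiset_prod_X_sub_C
      (Multiset.map (fun j => (b j : ℂ)) Finset.univ.val)
    rw [Multiset.map_map] at e1 e2
    rw [← e1, ← e2]
    congr 1
    simp only [Function.comp_def, ← Finset.prod_eq_multiset_prod,
      ← my_charpoly_hermitian hG, hcp]
  have h2 := congrArg (fun s => (Multiset.map (fun z : ℂ => f z.re) s).sum) key
  simp only [Multiset.map_map, Function.comp_def, Complex.ofReal_re] at h2
  rw [← Finset.sum_eq_multiset_sum, ← Finset.sum_eq_multiset_sum] at h2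
  exact h2

open Matrix in
lemma my_trace_cfc {n : Type*} [Fintype n] [DecidableEq n]
    {G : Matrix n n ℂ} (hG : G.IsHermitian) (f : ℝ → ℝ) :
    ((cfc f G).trace).re = ∑ i, f (hG.eigenvalues i) := by
  rw [hG.cfc_eq f, Matrix.IsHermitian.cfc, Unitary.conjStarAlgAut_apply, Matrix.trace_mul_cycle,
    show (star hG.eigenvectorUnitary : Matrix n n ℂ) * (hG.eigenvectorUnitary : Matrix n n ℂ) = 1
      from Unitary.star_mul_self_of_mem hG.eigenvectorUnitary.2,
    one_mul, Matrix.trace_diagonal]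
  rw [Complex.re_sum]
  simp

open Matrix in
lemma my_peierls {n : Type*} [Fintype n] [DecidableEq n]
    {G : Matrix n n ℂ} (hG : G.IsHermitian) (hpos : ∀ i, 0 ≤ hG.eigenvalues i)
    {f : ℝ → ℝ} (hf : ConvexOn ℝ (Set.Ici 0) f)
    (V : Matrix n n ℂ) (hV : V ∈ Matrix.unitaryGroup n ℂ) :
    ∑ i, f (((star V * G * V) i i).re) ≤ ∑ i, f (hG.eigenvalues i) := by
  classical
  set U : Matrix n n ℂ := (hG.eigenvectorUnitary : Matrix n n ℂ) with hU
  set Cm : Matrix n n ℂ := star V * U with hCm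
  set w : n → n → ℝ := fun i j => Complex.normSq (Cm i j) with hw
  have hUu : U * star U = 1 := (Matrix.mem_unitaryGroup_iff).mp hG.eigenvectorUnitary.2
  have hsCm : star Cm = star U * V := by rw [hCm, StarMul.star_mul, star_star]
  have h1 : Cm * star Cm = 1 := by
    rw [hsCm, hCm, mul_assoc, ← mul_assoc U, hUu, one_mul,
      (Matrix.mem_unitaryGroup_iff').mp hV]
  have h2 : star Cm * Cm = 1 := by
    rw [hsCm, hCm, mul_assoc, ← mul_assoc V, (Matrix.mem_unitaryGroup_iff).mp hV, one_mul,
      (Matrix.mem_unitaryGroup_iff').mp hG.eigenvectorUnitary.2]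
  have hrow : ∀ i, ∑ j, w i j = 1 := by
    intro i
    have h1' : (Cm * star Cm) i i = 1 := by rw [h1, Matrix.one_apply_eq]
    rw [Matrix.mul_apply] at h1'
    have := congrArg Complex.re h1'
    rw [Complex.re_sum] at this
    simpa [hw, Matrix.star_apply, Matrix.conjTranspose_apply, Complex.mul_conj] using this
  have hcol : ∀ j, ∑ i, w i j = 1 := by
    intro j
    have h2' : (star Cm * Cm) j j = 1 := by rw [h2, Matrix.one_apply_eq]
    rw [Matrix.mul_apply] at h2'
    have := congrArg Complex.re h2'
    rw [Complex.re_sum] at this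
    simpa [hw, Matrix.star_apply, Matrix.conjTranspose_apply, mul_comm, Complex.mul_conj]
      using this
  have hdiag : ∀ i, ((star V * G * V) i i).re = ∑ j, w i j * hG.eigenvalues j := by
    intro i
    have hGV : star V * G * V
        = Cm * Matrix.diagonal (RCLike.ofReal ∘ hG.eigenvalues) * star Cm := by
      rw [hsCm, hCm, hU]
      conv_lhs => rw [hG.spectral_theorem, Unitary.conjStarAlgAut_apply]
      simp only [mul_assoc]
    rw [hGV, Matrix.mul_apply, Complex.re_sum]
    apply Finset.sum_congr rfl
    intro j _
    rw [Matrix.mul_diagonal, Matrix.star_apply]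
    have hz : Cm i j * (RCLike.ofReal ∘ hG.eigenvalues) j * star (Cm i j)
        = ((w i j : ℂ)) * ((hG.eigenvalues j : ℝ) : ℂ) := by
      simp only [hw, Function.comp_apply, RCLike.star_def]
      rw [mul_comm (Cm i j) _, mul_assoc, Complex.mul_conj, mul_comm]
      norm_num
    rw [hz]
    simp
  calc ∑ i, f (((star V * G * V) i i).re)
      = ∑ i, f (∑ j, w i j • hG.eigenvalues j) := by
        simp only [smul_eq_mul]
        exact Finset.sum_congr rfl fun i _ => by rw [hdiag i]
    _ ≤ ∑ i, ∑ j, w i j * f (hG.eigenvalues j) := by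
        apply Finset.sum_le_sum
        intro i _
        exact hf.map_sum_le (fun j _ => Complex.normSq_nonneg _) (hrow i)
          (fun j _ => hpos j)
    _ = ∑ j, (∑ i, w i j) * f (hG.eigenvalues j) := by
        rw [Finset.sum_comm]
        simp [Finset.sum_mul]
    _ = ∑ j, f (hG.eigenvalues j) := by
        apply Finset.sum_congr rfl
        intro j _
        rw [hcol j, one_mul]

open Matrix ComplexOrder in
lemma my_psd_diag_re_nonneg {n : Type*} [Fintype n] [DecidableEq n]
    {M : Matrix n n ℂ} (hM : M.PosSemidef) (i : n) : 0 ≤ (M i i).re := by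
  have := hM.re_dotProduct_nonneg (Pi.single i 1)
  simpa [dotProduct, Matrix.mulVec, Pi.single_apply, Finset.sum_ite_eq,
    Complex.re_sum] using this

open Matrix in
lemma my_fromBlocks_unitary {n : Type*} [Fintype n] [DecidableEq n]
    {V₁ V₂ : Matrix n n ℂ} (h₁ : V₁ ∈ Matrix.unitaryGroup n ℂ)
    (h₂ : V₂ ∈ Matrix.unitaryGroup n ℂ) :
    Matrix.fromBlocks V₁ 0 0 V₂ ∈ Matrix.unitaryGroup (n ⊕ n) ℂ := by
  rw [Matrix.mem_unitaryGroup_iff]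
  have : star (Matrix.fromBlocks V₁ 0 0 V₂) = Matrix.fromBlocks (star V₁) 0 0 (star V₂) := by
    show (Matrix.fromBlocks V₁ 0 0 V₂)ᴴ = _
    rw [Matrix.fromBlocks_conjTranspose]
    simp [Matrix.star_eq_conjTranspose]
  rw [this, Matrix.fromBlocks_multiply]
  simp [(Matrix.mem_unitaryGroup_iff).mp h₁, (Matrix.mem_unitaryGroup_iff).mp h₂,
    ← Matrix.fromBlocks_one]

lemma my_rpow_add_le {q : ℝ} (hq : 1 ≤ q) {a b : ℝ} (ha : 0 ≤ a) (hb : 0 ≤ b) :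
    (a + b) ^ q ≤ 2 ^ (q - 1) * (a ^ q + b ^ q) := by
  have h := (convexOn_rpow hq).2 (Set.mem_Ici.mpr ha) (Set.mem_Ici.mpr hb)
    (by norm_num : (0:ℝ) ≤ (1/2:ℝ)) (by norm_num : (0:ℝ) ≤ (1/2:ℝ)) (by norm_num)
  simp only [smul_eq_mul] at h
  have h2 : (a + b) ^ q = 2 ^ q * (1/2 * a + 1/2 * b) ^ q := by
    rw [← Real.mul_rpow (by norm_num) (by linarith)]
    ring_nf
  have h3 : (2:ℝ) ^ (q - 1) = 2 ^ q / 2 := by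
    rw [Real.rpow_sub (by norm_num), Real.rpow_one]
  rw [h2, h3]
  calc (2:ℝ) ^ q * (1/2 * a + 1/2 * b) ^ q ≤ 2 ^ q * (1/2 * a ^ q + 1/2 * b ^ q) := by
        apply mul_le_mul_of_nonneg_left h (Real.rpow_nonneg (by norm_num) q)
    _ = 2 ^ q / 2 * (a ^ q + b ^ q) := by ring

lemma my_star_mul_self_mul_eq_diagonal {n : Type*} [Fintype n] [DecidableEq n]
    {A : Matrix n n ℂ} (hA : A.IsHermitian) :
    star (hA.eigenvectorUnitary : Matrix n n ℂ) * A * (hA.eigenvectorUnitary : Matrix n n ℂ)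
      = Matrix.diagonal (RCLike.ofReal ∘ hA.eigenvalues) := by
  rw [← hA.conjStarAlgAut_star_eigenvectorUnitary, Unitary.conjStarAlgAut_star_apply]

open Matrix ComplexOrder in
theorem schatten_clarkson
    {d : Type*} [Fintype d] [DecidableEq d]
    (A B : Matrix d d ℂ) (p : ℝ) (hp : 2 ≤ p) :
    schattenPowNorm p (A + B) + schattenPowNorm p (A - B)
      ≤ 2 ^ (p - 1) * (schattenPowNorm p A + schattenPowNorm p B) := by
  classical
  have hq1 : (1:ℝ) ≤ p / 2 := by linarith
  set f : ℝ → ℝ := fun x => x ^ (p / 2) with hfdef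
  have hf : ConvexOn ℝ (Set.Ici 0) f := convexOn_rpow hq1
  have hf0 : f 0 = 0 := Real.zero_rpow (by linarith : (0:ℝ) < p / 2).ne'
  set C := A + B with hC
  set D := A - B with hD
  have hS : (Cᴴ * C).PosSemidef := posSemidef_conjTranspose_mul_self C
  have hT : (Dᴴ * D).PosSemidef := posSemidef_conjTranspose_mul_self D
  have hPA : (A * Aᴴ).PosSemidef := posSemidef_self_mul_conjTranspose A
  have hPB : (B * Bᴴ).PosSemidef := posSemidef_self_mul_conjTranspose B
  have hPA' : (Aᴴ * A).PosSemidef := posSemidef_conjTranspose_mul_self A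
  have hPB' : (Bᴴ * B).PosSemidef := posSemidef_conjTranspose_mul_self B
  set R2 : Matrix d d ℂ := C * Cᴴ + D * Dᴴ with hR2def
  have hR2 : R2.PosSemidef :=
    (posSemidef_self_mul_conjTranspose C).add (posSemidef_self_mul_conjTranspose D)
  -- the big block matrix
  set Z : Matrix (d ⊕ d) (d ⊕ d) ℂ := Matrix.fromBlocks Cᴴ 0 Dᴴ 0 with hZdef
  have hZconj : Zᴴ = Matrix.fromBlocks C D 0 0 := by
    rw [hZdef, Matrix.fromBlocks_conjTranspose]
    simp
  have hG : Z * Zᴴ = Matrix.fromBlocks (Cᴴ * C) (Cᴴ * D) (Dᴴ * C) (Dᴴ * D) := by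
    rw [hZconj, hZdef, Matrix.fromBlocks_multiply]
    simp
  have hH : Zᴴ * Z = Matrix.fromBlocks R2 0 0 0 := by
    rw [hZconj, hZdef, Matrix.fromBlocks_multiply]
    simp [hR2def]
  have hGpsd : (Z * Zᴴ).PosSemidef := posSemidef_self_mul_conjTranspose Z
  -- eigenbasis block unitary
  set V₁ : Matrix d d ℂ := (hS.1.eigenvectorUnitary : Matrix d d ℂ) with hV₁
  set V₂ : Matrix d d ℂ := (hT.1.eigenvectorUnitary : Matrix d d ℂ) with hV₂
  set V : Matrix (d ⊕ d) (d ⊕ d) ℂ := Matrix.fromBlocks V₁ 0 0 V₂ with hVdef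
  have hV : V ∈ Matrix.unitaryGroup (d ⊕ d) ℂ :=
    my_fromBlocks_unitary hS.1.eigenvectorUnitary.2 hT.1.eigenvectorUnitary.2
  have hsV : star V = Matrix.fromBlocks (star V₁) 0 0 (star V₂) := by
    show Vᴴ = _
    rw [hVdef, Matrix.fromBlocks_conjTranspose]
    simp [Matrix.star_eq_conjTranspose]
  have hblock : star V * (Z * Zᴴ) * V =
      Matrix.fromBlocks (star V₁ * (Cᴴ * C) * V₁) (star V₁ * (Cᴴ * D) * V₂)
        (star V₂ * (Dᴴ * C) * V₁) (star V₂ * (Dᴴ * D) * V₂) := by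
    rw [hsV, hG, hVdef, Matrix.fromBlocks_multiply, Matrix.fromBlocks_multiply]
    simp [Matrix.mul_assoc]
  have hentry : ∀ i : d ⊕ d, ((star V * (Z * Zᴴ) * V) i i).re
      = Sum.elim hS.1.eigenvalues hT.1.eigenvalues i := by
    intro i
    rcases i with i | i
    · rw [hblock, Matrix.fromBlocks_apply₁₁, my_star_mul_self_mul_eq_diagonal hS.1]
      simp
    · rw [hblock, Matrix.fromBlocks_apply₂₂, my_star_mul_self_mul_eq_diagonal hT.1]
      simp
  -- step B data
  set U : Matrix d d ℂ := (hR2.1.eigenvectorUnitary : Matrix d d ℂ) with hU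
  set a : d → ℝ := fun i => ((star U * (A * Aᴴ) * U) i i).re with ha
  set b : d → ℝ := fun i => ((star U * (B * Bᴴ) * U) i i).re with hb
  have hU2 : U ∈ Matrix.unitaryGroup d ℂ := hR2.1.eigenvectorUnitary.2
  have ha0 : ∀ i, 0 ≤ a i := fun i => my_psd_diag_re_nonneg
    (by simpa [Matrix.star_eq_conjTranspose] using hPA.conjTranspose_mul_mul_same U) i
  have hb0 : ∀ i, 0 ≤ b i := fun i => my_psd_diag_re_nonneg
    (by simpa [Matrix.star_eq_conjTranspose] using hPB.conjTranspose_mul_mul_same U) i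
  have hR2eq : R2 = (A * Aᴴ + B * Bᴴ) + (A * Aᴴ + B * Bᴴ) := by
    rw [hR2def, hC, hD, conjTranspose_add, conjTranspose_sub]
    noncomm_ring
  have heigR2 : ∀ i, hR2.1.eigenvalues i = 2 * (a i + b i) := by
    intro i
    have h1 : ((star U * R2 * U) i i).re = hR2.1.eigenvalues i := by
      rw [my_star_mul_self_mul_eq_diagonal hR2.1]
      simp
    have h2 : star U * R2 * U = (star U * (A * Aᴴ) * U + star U * (B * Bᴴ) * U)
        + (star U * (A * Aᴴ) * U + star U * (B * Bᴴ) * U) := by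
      rw [hR2eq]
      noncomm_ring
    rw [← h1, h2]
    simp only [Matrix.add_apply, Complex.add_re, ha, hb]
    ring
  -- the chain
  have e1 : schattenPowNorm p C = ∑ i, f (hS.1.eigenvalues i) := my_trace_cfc hS.1 f
  have e2 : schattenPowNorm p D = ∑ i, f (hT.1.eigenvalues i) := my_trace_cfc hT.1 f
  have e3 : schattenPowNorm p A = ∑ i, f (hPA'.1.eigenvalues i) := my_trace_cfc hPA'.1 f
  have e4 : schattenPowNorm p B = ∑ i, f (hPB'.1.eigenvalues i) := my_trace_cfc hPB'.1 f
  have swapA : ∑ i, f (hPA.1.eigenvalues i) = ∑ i, f (hPA'.1.eigenvalues i) :=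
    my_sum_f_eigen hPA.1 hPA'.1.eigenvalues
      (by rw [my_charpoly_mul_comm A Aᴴ, my_charpoly_hermitian hPA'.1]) f
  have swapB : ∑ i, f (hPB.1.eigenvalues i) = ∑ i, f (hPB'.1.eigenvalues i) :=
    my_sum_f_eigen hPB.1 hPB'.1.eigenvalues
      (by rw [my_charpoly_mul_comm B Bᴴ, my_charpoly_hermitian hPB'.1]) f
  have hcpG : (Z * Zᴴ).charpoly = ∏ j : d ⊕ d,
      (Polynomial.X - Polynomial.C ((Sum.elim hR2.1.eigenvalues (fun _ => (0:ℝ)) j : ℝ) : ℂ)) := by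
    rw [my_charpoly_mul_comm Z Zᴴ, hH, Matrix.charpoly_fromBlocks_zero₂₁,
      my_charpoly_hermitian hR2.1, Fintype.prod_sum_type]
    have h0 : (0 : Matrix d d ℂ).charpoly = ∏ _i : d, (Polynomial.X - Polynomial.C (0:ℂ)) := by
      rw [show (0 : Matrix d d ℂ) = Matrix.diagonal (fun _ => (0:ℂ)) by simp,
        my_charpoly_diagonal]
    rw [h0]
    simp
  have step1 : schattenPowNorm p C + schattenPowNorm p D ≤ ∑ j, f (hGpsd.1.eigenvalues j) := by
    rw [e1, e2]
    have : ∑ i : d ⊕ d, f (((star V * (Z * Zᴴ) * V) i i).re)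
        = ∑ i, f (hS.1.eigenvalues i) + ∑ i, f (hT.1.eigenvalues i) := by
      rw [Fintype.sum_sum_type]
      congr 1 <;> exact Finset.sum_congr rfl fun i _ => by rw [hentry]; simp
    rw [← this]
    exact my_peierls hGpsd.1 hGpsd.eigenvalues_nonneg hf V hV
  have step2 : ∑ j, f (hGpsd.1.eigenvalues j) = ∑ i, f (hR2.1.eigenvalues i) := by
    rw [my_sum_f_eigen hGpsd.1 (Sum.elim hR2.1.eigenvalues (fun _ => (0:ℝ))) hcpG f,
      Fintype.sum_sum_type]
    simp [hf0]
  have step3 : ∑ i, f (hR2.1.eigenvalues i)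
      ≤ 2 ^ (p / 2) * (2 ^ (p / 2 - 1) * ((∑ i, f (a i)) + ∑ i, f (b i))) := by
    calc ∑ i, f (hR2.1.eigenvalues i)
        = ∑ i, 2 ^ (p / 2) * f (a i + b i) := by
          apply Finset.sum_congr rfl
          intro i _
          rw [heigR2 i, hfdef]
          exact Real.mul_rpow (by norm_num) (by have := ha0 i; have := hb0 i; linarith)
      _ ≤ ∑ i, 2 ^ (p / 2) * (2 ^ (p / 2 - 1) * (f (a i) + f (b i))) := by
          apply Finset.sum_le_sum
          intro i _
          exact mul_le_mul_of_nonneg_left (my_rpow_add_le hq1 (ha0 i) (hb0 i))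
            (Real.rpow_nonneg (by norm_num) _)
      _ = 2 ^ (p / 2) * (2 ^ (p / 2 - 1) * ((∑ i, f (a i)) + ∑ i, f (b i))) := by
          rw [← Finset.mul_sum, ← Finset.mul_sum, Finset.sum_add_distrib]
  have step4 : ∑ i, f (a i) ≤ schattenPowNorm p A := by
    rw [e3, ← swapA]
    exact my_peierls hPA.1 hPA.eigenvalues_nonneg hf U hU2
  have step5 : ∑ i, f (b i) ≤ schattenPowNorm p B := by
    rw [e4, ← swapB]
    exact my_peierls hPB.1 hPB.eigenvalues_nonneg hf U hU2
  have hconst : (2:ℝ) ^ (p / 2) * 2 ^ (p / 2 - 1) = 2 ^ (p - 1) := by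
    rw [← Real.rpow_add (by norm_num)]
    ring_nf
  calc schattenPowNorm p C + schattenPowNorm p D
      ≤ ∑ j, f (hGpsd.1.eigenvalues j) := step1
    _ = ∑ i, f (hR2.1.eigenvalues i) := step2
    _ ≤ 2 ^ (p / 2) * (2 ^ (p / 2 - 1) * ((∑ i, f (a i)) + ∑ i, f (b i))) := step3
    _ = 2 ^ (p / 2) * 2 ^ (p / 2 - 1) * ((∑ i, f (a i)) + ∑ i, f (b i)) := by ring
    _ ≤ 2 ^ (p / 2) * 2 ^ (p / 2 - 1) * (schattenPowNorm p A + schattenPowNorm p B) := by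
        apply mul_le_mul_of_nonneg_left (add_le_add step4 step5)
        positivity
    _ = 2 ^ (p - 1) * (schattenPowNorm p A + schattenPowNorm p B) := by rw [hconst]
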